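/- Let F : ℝⁿ × ℝᵐ → ℝ have the form F(x,z) = g(z)ᵀx, where g : ℝᵐ → ℝⁿ is C¹. Assume there exists a saddle point (x*,z*) of F such that: (i) F(x*,z*) ≥ F(x*,z) for all z ∈ ℝᵐ; (ii) for any z ∈ ℝᵐ, g(z)ᵀx* = 0 implies g(z) = 0; and (iii) every trajectory of the saddle-point dynamics ẋ = -∇ₓF(x,z), ż = ∇_zF(x,z) is bounded. Then every trajectory of the saddle-point dynamics converges asymptotically to the set of equilibrium points of the dynamics, i.e., dist((x(t),z(t)), {(x,z) : g(z) = 0 and Dg(z)ᵀx = 0}) → 0 as t → ∞. -/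

import Mathlib

open Metric Filter Topology Set

noncomputable section

/-- Euclidean space `ℝⁿ`. -/
abbrev En (n : ℕ) : Type := EuclideanSpace ℝ (Fin n)

variable {n m : ℕ}

/-- Partial gradient of `F` in the first (x) variable. -/
def gradX (F : En n × En m → ℝ) (p : En n × En m) : En n :=
  gradient (fun x => F (x, p.2)) p.1

/-- Partial gradient of `F` in the second (z) variable. -/
def gradZ (F : En n × En m → ℝ) (p : En n × En m) : En m :=
  gradient (fun z => F (p.1, z)) p.2

/-- The saddle-point vector field `X_sp = (-∇ₓF, ∇_zF)`. -/
def Xsp (F : En n × En m → ℝ) (p : En n × En m) : En n × En m :=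
  (-gradX F p, gradZ F p)

/-- A trajectory of the saddle-point dynamics, defined on `[0,∞)`. -/
def IsTrajectory (F : En n × En m → ℝ) (φ : ℝ → En n × En m) : Prop :=
  ∀ t : ℝ, 0 ≤ t → HasDerivAt φ (Xsp F (φ t)) t

/-- `p` is a (local min-max) saddle point of `F`. -/
def IsSaddlePoint (F : En n × En m → ℝ) (p : En n × En m) : Prop :=
  ∃ U : Set (En n), ∃ W : Set (En m),
    IsOpen U ∧ IsOpen W ∧ p.1 ∈ U ∧ p.2 ∈ W ∧
    ∀ x ∈ U, ∀ z ∈ W, F (p.1, z) ≤ F p ∧ F p ≤ F (x, p.2)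

/-- The set of saddle points of `F`. -/
def SaddleSet (F : En n × En m → ℝ) : Set (En n × En m) :=
  {p | IsSaddlePoint F p}

/-- A point `p` is stable for the saddle-point dynamics of `F`. -/
def StablePt (F : En n × En m → ℝ) (p : En n × En m) : Prop :=
  ∀ ε > 0, ∃ δ > 0, ∀ φ : ℝ → En n × En m, IsTrajectory F φ →
    dist (φ 0) p < δ → ∀ t : ℝ, 0 ≤ t → dist (φ t) p < ε

/-- `S` is an isolated path connected component of `T`. -/
def IsIsolatedPathComponent (S T : Set (En n × En m)) : Prop :=
  S ⊆ T ∧ (∀ a ∈ S, ∀ b ∈ S, JoinedIn S a b) ∧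
    ∃ U : Set (En n × En m), IsOpen U ∧ S ⊆ U ∧ U ∩ T = S

/-- `F` is locally convex-concave at `p`. -/
def LocallyConvexConcaveAt (F : En n × En m → ℝ) (p : En n × En m) : Prop :=
  ∃ U : Set (En n × En m), IsOpen U ∧ p ∈ U ∧
    ∀ q ∈ U, ConvexOn ℝ {x : En n | (x, q.2) ∈ U} (fun x => F (x, q.2)) ∧
      ConcaveOn ℝ {z : En m | (q.1, z) ∈ U} (fun z => F (q.1, z))

/-- `F` is locally strictly convex-concave at `p`. -/
def LocallyStrictlyConvexConcaveAt (F : En n × En m → ℝ) (p : En n × En m) : Prop :=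
  LocallyConvexConcaveAt F p ∧
    ((∃ r > 0, StrictConvexOn ℝ (ball p.1 r) (fun x => F (x, p.2))) ∨
      (∃ r > 0, StrictConcaveOn ℝ (ball p.2 r) (fun z => F (p.1, z))))

section AuxLemmas

lemma hasGradientAt_inner_const' (v x0 : En n) :
    HasGradientAt (fun x : En n => (inner ℝ v x : ℝ)) v x0 := by
  rw [hasGradientAt_iff_hasFDerivAt]
  exact (InnerProductSpace.toDual ℝ (En n) v).hasFDerivAt

lemma hasGradientAt_inner_comp' (g : En m → En n) (x : En n) (z : En m) (D : En m →L[ℝ] En n)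
    (hD : HasFDerivAt g D z) :
    HasGradientAt (fun z => (inner ℝ (g z) x : ℝ)) (ContinuousLinearMap.adjoint D x) z := by
  rw [hasGradientAt_iff_hasFDerivAt]
  have h1 : HasFDerivAt (fun z => (inner ℝ (g z) x : ℝ)) ((innerSL ℝ x).comp D) z := by
    have h2 : (fun z => (inner ℝ (g z) x : ℝ)) = (fun z => (inner ℝ x (g z) : ℝ)) := by
      funext w; exact real_inner_comm _ _
    rw [h2]
    exact (innerSL ℝ x).hasFDerivAt.comp z hD
  refine h1.congr_fderiv ?_
  ext w
  simp only [ContinuousLinearMap.coe_comp', Function.comp_apply, innerSL_apply_apply,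
    InnerProductSpace.toDual_apply_apply]
  rw [ContinuousLinearMap.adjoint_inner_left, real_inner_comm]

/-- increment lemma: derivative ≥ c on `[a, a+δ]` gives increase `δ*c`. -/
lemma increment_ge {β β' : ℝ → ℝ} {a δ c : ℝ} (hδ : 0 ≤ δ)
    (hd : ∀ t ∈ Icc a (a + δ), HasDerivAt β (β' t) t)
    (hc : ∀ t ∈ Icc a (a + δ), c ≤ β' t) :
    δ * c ≤ β (a + δ) - β a := by
  set γ : ℝ → ℝ := fun t => β t - c * t with hγ
  have hmono : MonotoneOn γ (Icc a (a + δ)) := by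
    apply monotoneOn_of_hasDerivWithinAt_nonneg (f' := fun t => β' t - c) (convex_Icc a (a + δ))
    · exact fun t ht => ((hd t ht).continuousAt.sub (by fun_prop)).continuousWithinAt
    · intro t ht
      have hcm : HasDerivAt (fun t : ℝ => c * t) c t := by
        simpa using (hasDerivAt_id t).const_mul c
      exact ((hd t (interior_subset ht)).sub hcm).hasDerivWithinAt
    · intro t ht
      rw [interior_Icc] at ht
      have := hc t (Ioo_subset_Icc_self ht)
      linarith
  have h1 : γ a ≤ γ (a + δ) :=
    hmono (by constructor <;> linarith) (by constructor <;> linarith) (by linarith)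
  simp only [hγ] at h1
  nlinarith

/-- Lipschitz estimate from bounded derivative on a convex set. -/
lemma lip_of_deriv_bound {E : Type*} [NormedAddCommGroup E] [NormedSpace ℝ E]
    {f : ℝ → E} {f' : ℝ → E} {s : Set ℝ} {L : ℝ} (hs : Convex ℝ s)
    (hd : ∀ t ∈ s, HasDerivAt f (f' t) t) (hb : ∀ t ∈ s, ‖f' t‖ ≤ L)
    {x y : ℝ} (hx : x ∈ s) (hy : y ∈ s) : ‖f y - f x‖ ≤ L * ‖y - x‖ :=
  hs.norm_image_sub_le_of_norm_hasDerivWithin_le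
    (fun t ht => (hd t ht).hasDerivWithinAt) hb hx hy

end AuxLemmas

set_option maxHeartbeats 2000000 in
theorem stmt_11 {n m : ℕ} (g : En m → En n) (hg : ContDiff ℝ 1 g)
    (F : En n × En m → ℝ) (hFg : ∀ p : En n × En m, F p = (inner ℝ (g p.2) p.1 : ℝ))
    (pstar : En n × En m) (hsaddle : IsSaddlePoint F pstar)
    (hmax : ∀ z : En m, F (pstar.1, z) ≤ F pstar)
    (hker : ∀ z : En m, (inner ℝ (g z) pstar.1 : ℝ) = 0 → g z = 0)
    (hbdd : ∀ φ : ℝ → En n × En m, IsTrajectory F φ →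
      ∃ C : ℝ, ∀ t : ℝ, 0 ≤ t → ‖φ t‖ ≤ C) :
    ∀ φ : ℝ → En n × En m, IsTrajectory F φ →
      Tendsto
        (fun t : ℝ => infDist (φ t)
          {q : En n × En m | g q.2 = 0 ∧
            ContinuousLinearMap.adjoint (fderiv ℝ g q.2) q.1 = 0})
        atTop (𝓝 0) := by
  intro φ hφ
  set E : Set (En n × En m) :=
    {q : En n × En m | g q.2 = 0 ∧ ContinuousLinearMap.adjoint (fderiv ℝ g q.2) q.1 = 0} with hE
  set A : En m → (En n →L[ℝ] En m) := fun z => ContinuousLinearMap.adjoint (fderiv ℝ g z) with hA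
  have hgd : ∀ z, HasFDerivAt g (fderiv ℝ g z) z :=
    fun z => (hg.differentiable one_ne_zero z).hasFDerivAt
  -- the vector field explicitly
  have hXsp : ∀ p : En n × En m, Xsp F p = (-(g p.2), A p.2 p.1) := by
    intro p
    unfold Xsp gradX gradZ
    have e1 : (fun x => F (x, p.2)) = fun x => (inner ℝ (g p.2) x : ℝ) :=
      funext fun x => hFg (x, p.2)
    have e2 : (fun z => F (p.1, z)) = fun z => (inner ℝ (g z) p.1 : ℝ) :=
      funext fun z => hFg (p.1, z)
    rw [e1, e2, (hasGradientAt_inner_const' (g p.2) p.1).gradient,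
      (hasGradientAt_inner_comp' g p.1 p.2 _ (hgd p.2)).gradient]
  -- componentwise derivatives
  have hd1 : ∀ t : ℝ, 0 ≤ t → HasDerivAt (fun s => (φ s).1) (-(g ((φ t).2))) t := by
    intro t ht
    have := (hφ t ht).fst
    rwa [hXsp (φ t)] at this
  have hd2 : ∀ t : ℝ, 0 ≤ t → HasDerivAt (fun s => (φ s).2) (A ((φ t).2) ((φ t).1)) t := by
    intro t ht
    have := (hφ t ht).snd
    rwa [hXsp (φ t)] at this
  -- boundedness
  obtain ⟨C, hC⟩ := hbdd φ hφ
  set K : Set (En n × En m) := closedBall 0 C with hK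
  have hKc : IsCompact K := isCompact_closedBall 0 C
  have hKφ : ∀ t : ℝ, 0 ≤ t → φ t ∈ K := by
    intro t ht
    simpa [hK, mem_closedBall, dist_zero_right] using hC t ht
  -- g(z*) = 0
  have hgz : g pstar.2 = 0 := by
    by_contra hne
    obtain ⟨U, W, hU, _, hxU, hzW, hsp⟩ := hsaddle
    obtain ⟨ε, hε, hball⟩ := Metric.isOpen_iff.1 hU pstar.1 hxU
    have hgn : (0:ℝ) < ‖g pstar.2‖ := norm_pos_iff.2 hne
    set c : ℝ := ε / (2 * ‖g pstar.2‖) with hc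
    have hcpos : 0 < c := by positivity
    set x' : En n := pstar.1 - c • g pstar.2 with hx'
    have hx'U : x' ∈ U := by
      apply hball
      rw [mem_ball, dist_eq_norm]
      have : x' - pstar.1 = -(c • g pstar.2) := by rw [hx']; abel
      rw [this, norm_neg, norm_smul, Real.norm_eq_abs, abs_of_pos hcpos, hc]
      have he : ε / (2 * ‖g pstar.2‖) * ‖g pstar.2‖ = ε / 2 := by
        field_simp
      rw [he]; linarith
    have hle := (hsp x' hx'U pstar.2 hzW).2
    have hFp : F pstar = (inner ℝ (g pstar.2) pstar.1 : ℝ) := by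
      have := hFg pstar; simpa using this
    rw [hFp, hFg (x', pstar.2)] at hle
    simp only [hx'] at hle
    rw [inner_sub_right, real_inner_smul_right, real_inner_self_eq_norm_sq] at hle
    linarith [mul_pos hcpos (pow_pos hgn 2)]
  have hFstar : F pstar = 0 := by
    have := hFg pstar
    rw [this, hgz, inner_zero_left]
  -- h(z) ≤ 0
  have hneg : ∀ z : En m, (inner ℝ (g z) pstar.1 : ℝ) ≤ 0 := by
    intro z
    have := hmax z
    rwa [hFg (pstar.1, z), hFstar] at this
  -- derivative of t ↦ ⟪g(z t), w⟫ for fixed w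
  have hgw : ∀ (w : En n) (t : ℝ), 0 ≤ t →
      HasDerivAt (fun s => (inner ℝ (g ((φ s).2)) w : ℝ))
        (inner ℝ (A ((φ t).2) ((φ t).1)) (A ((φ t).2) w) : ℝ) t := by
    intro w t ht
    have hcomp : HasDerivAt (fun s => g ((φ s).2))
        ((fderiv ℝ g ((φ t).2)) (A ((φ t).2) ((φ t).1))) t :=
      (hgd ((φ t).2)).comp_hasDerivAt t (hd2 t ht)
    have := (hcomp.inner ℝ (hasDerivAt_const t w))
    simp only [inner_zero_right, add_zero, zero_add] at this
    have heq : (inner ℝ (A ((φ t).2) ((φ t).1)) (A ((φ t).2) w) : ℝ)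
        = inner ℝ ((fderiv ℝ g ((φ t).2)) (A ((φ t).2) ((φ t).1))) w := by
      simp only [hA]
      rw [ContinuousLinearMap.adjoint_inner_right]
    rw [heq]; exact this
  -- derivative of α = ⟪x(t), x*⟫
  have hα' : ∀ t : ℝ, 0 ≤ t →
      HasDerivAt (fun s => (inner ℝ ((φ s).1) pstar.1 : ℝ))
        (-(inner ℝ (g ((φ t).2)) pstar.1 : ℝ)) t := by
    intro t ht
    have := (hd1 t ht).inner ℝ (hasDerivAt_const t pstar.1)
    simpa [inner_neg_left] using this
  set h : ℝ → ℝ := fun t => (inner ℝ (g ((φ t).2)) pstar.1 : ℝ) with hhdef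
  set α : ℝ → ℝ := fun t => (inner ℝ ((φ t).1) pstar.1 : ℝ) with hαdef
  -- continuity data
  have hfd : Continuous (fderiv ℝ g) := hg.continuous_fderiv one_ne_zero
  have hAcont : Continuous A := ContinuousLinearMap.adjoint.continuous.comp hfd
  have hNcont : Continuous (fun p : En n × En m =>
      (inner ℝ (A p.2 p.1) (A p.2 pstar.1) : ℝ)) := by
    exact Continuous.inner
      (Continuous.clm_apply (hAcont.comp continuous_snd) continuous_fst)
      (Continuous.clm_apply (hAcont.comp continuous_snd) continuous_const)
  obtain ⟨L, hL⟩ := hKc.exists_bound_of_continuousOn hNcont.continuousOn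
  have hL0 : 0 ≤ L := le_trans (norm_nonneg _) (hL (φ 0) (hKφ 0 le_rfl))
  -- h is nonpositive
  have hhneg : ∀ t : ℝ, h t ≤ 0 := fun t => hneg ((φ t).2)
  -- α is monotone on [0, ∞)
  have hmonoα : MonotoneOn α (Ici 0) := by
    apply monotoneOn_of_hasDerivWithinAt_nonneg (f' := fun t => -(h t)) (convex_Ici 0)
    · exact fun t ht => (hα' t ht).continuousAt.continuousWithinAt
    · intro t ht
      rw [interior_Ici] at ht
      exact (hα' t ht.le).hasDerivWithinAt
    · intro t ht
      have := hhneg t; linarith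
  -- α is bounded above
  have hαbdd : ∀ t : ℝ, 0 ≤ t → α t ≤ C * ‖pstar.1‖ := by
    intro t ht
    calc α t ≤ ‖(φ t).1‖ * ‖pstar.1‖ := real_inner_le_norm _ _
      _ ≤ C * ‖pstar.1‖ := by
          apply mul_le_mul_of_nonneg_right _ (norm_nonneg _)
          exact le_trans (norm_fst_le (φ t)) (hC t ht)
  -- h(t) → 0
  have htend0 : Tendsto h atTop (𝓝 0) := by
    by_contra hcon
    rw [Metric.tendsto_atTop] at hcon
    push_neg at hcon
    obtain ⟨ε, hε, hcon⟩ := hcon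
    have hdist : ∀ t : ℝ, ε ≤ dist (h t) 0 → ε ≤ -(h t) := by
      intro t hd
      rwa [Real.dist_eq, sub_zero, abs_of_nonpos (hhneg t)] at hd
    set δ : ℝ := ε / (2 * (L + 1)) with hδdef
    have hδpos : 0 < δ := by positivity
    have hLδ : (L + 1) * δ = ε / 2 := by
      rw [hδdef]; field_simp
    -- single-step increase of α
    have step : ∀ t₀ : ℝ, 0 ≤ t₀ → ε ≤ -(h t₀) → δ * (ε / 2) ≤ α (t₀ + δ) - α t₀ := by
      intro t₀ ht₀ hεt₀
      apply increment_ge hδpos.le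
      · intro t ht
        exact hα' t (le_trans ht₀ ht.1)
      · intro t ht
        have hlip : ‖h t - h t₀‖ ≤ (L + 1) * ‖t - t₀‖ := by
          apply lip_of_deriv_bound (f' := fun s =>
            (inner ℝ (A ((φ s).2) ((φ s).1)) (A ((φ s).2) pstar.1) : ℝ))
            (convex_Icc t₀ (t₀ + δ))
          · intro s hs
            exact hgw pstar.1 s (le_trans ht₀ hs.1)
          · intro s hs
            have := hL (φ s) (hKφ s (le_trans ht₀ hs.1))
            rw [Real.norm_eq_abs]
            calc |(inner ℝ (A ((φ s).2) ((φ s).1)) (A ((φ s).2) pstar.1) : ℝ)|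
                = ‖(inner ℝ (A ((φ s).2) ((φ s).1)) (A ((φ s).2) pstar.1) : ℝ)‖ := rfl
              _ ≤ L := this
              _ ≤ L + 1 := by linarith
          · exact ⟨le_refl t₀, by linarith [hδpos]⟩
          · exact ht
        have habs : ‖t - t₀‖ ≤ δ := by
          rw [Real.norm_eq_abs, abs_of_nonneg (by linarith [ht.1])]
          linarith [ht.2]
        have h2 : ‖h t - h t₀‖ ≤ ε / 2 := by
          calc ‖h t - h t₀‖ ≤ (L + 1) * ‖t - t₀‖ := hlip
            _ ≤ (L + 1) * δ := by
                apply mul_le_mul_of_nonneg_left habs; linarith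
            _ = ε / 2 := hLδ
        have h3 : |h t - h t₀| ≤ ε / 2 := h2
        rw [abs_le] at h3
        linarith [h3.1]
    -- iterate to contradict boundedness
    have grow : ∀ k : ℕ, ∃ t : ℝ, 0 ≤ t ∧ α 0 + k * (δ * (ε / 2)) ≤ α t := by
      intro k
      induction k with
      | zero => exact ⟨0, le_rfl, by simp⟩
      | succ k ih =>
        obtain ⟨t, ht0, hαt⟩ := ih
        obtain ⟨t', ht't, hεt'⟩ := hcon t
        have ht'0 : 0 ≤ t' := le_trans ht0 ht't
        have h1 : α t ≤ α t' := hmonoα ht0 ht'0 ht't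
        have h2 := step t' ht'0 (hdist t' hεt')
        refine ⟨t' + δ, by linarith, ?_⟩
        push_cast
        linarith
    have hc' : 0 < δ * (ε / 2) := by positivity
    obtain ⟨k, hk⟩ := exists_nat_gt ((C * ‖pstar.1‖ - α 0) / (δ * (ε / 2)))
    obtain ⟨t, ht0, hαt⟩ := grow k
    rw [div_lt_iff₀ hc'] at hk
    have := hαbdd t ht0
    linarith
  -- g(z(t)) → 0
  have gtend : Tendsto (fun t => g ((φ t).2)) atTop (𝓝 0) := by
    rw [Metric.tendsto_atTop]
    intro ε hε
    set S : Set (En m) := {z : En m | ‖z‖ ≤ C ∧ ε ≤ ‖g z‖} with hS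
    have hSc : IsCompact S := by
      apply (isCompact_closedBall (0 : En m) C).of_isClosed_subset
      · apply IsClosed.inter
        · exact isClosed_le continuous_norm continuous_const
        · exact isClosed_le continuous_const hg.continuous.norm
      · intro z hz
        simpa [mem_closedBall, dist_zero_right] using hz.1
    by_cases hSe : S.Nonempty
    · obtain ⟨z₀, hz₀S, hz₀min⟩ := hSc.exists_isMinOn hSe
        (Continuous.continuousOn (show Continuous (fun z : En m => -(inner ℝ (g z) pstar.1 : ℝ)) from
          (Continuous.inner (𝕜 := ℝ) hg.continuous continuous_const).neg))
      have hc0 : 0 < -(inner ℝ (g z₀) pstar.1 : ℝ) := by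
        rcases lt_or_eq_of_le (hneg z₀) with hlt | heq
        · linarith
        · exfalso
          have := hker z₀ heq
          rw [hS] at hz₀S
          have h2 := hz₀S.2
          rw [this, norm_zero] at h2
          linarith
      obtain ⟨N, hN⟩ := (Metric.tendsto_atTop.1 htend0) (-(inner ℝ (g z₀) pstar.1 : ℝ)) hc0
      refine ⟨max N 0, fun t ht => ?_⟩
      have ht0 : 0 ≤ t := le_trans (le_max_right N 0) ht
      have htN : N ≤ t := le_trans (le_max_left N 0) ht
      rw [dist_zero_right]
      by_contra hcon
      push_neg at hcon
      have hzS : (φ t).2 ∈ S := by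
        constructor
        · exact le_trans (norm_snd_le (φ t)) (hC t ht0)
        · exact hcon
      have h1 := hz₀min hzS
      have h2 := hN t htN
      rw [Real.dist_eq, sub_zero, abs_of_nonpos (hhneg t)] at h2
      simp only [hhdef] at h2
      have h3 : -(inner ℝ (g z₀) pstar.1 : ℝ) ≤ -(inner ℝ (g ((φ t).2)) pstar.1 : ℝ) := h1
      linarith
    · refine ⟨0, fun t ht => ?_⟩
      rw [dist_zero_right]
      by_contra hcon
      push_neg at hcon
      exact hSe ⟨(φ t).2, le_trans (norm_snd_le (φ t)) (hC t ht), hcon⟩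
  -- final convergence via compactness
  by_contra hmain
  rw [Metric.tendsto_atTop] at hmain
  push_neg at hmain
  obtain ⟨ε, hε, hmain⟩ := hmain
  have hu : ∀ k : ℕ, ∃ t : ℝ, (k : ℝ) ≤ t ∧ ε ≤ infDist (φ t) E := by
    intro k
    obtain ⟨t, ht, h2⟩ := hmain (k : ℝ)
    refine ⟨t, ht, ?_⟩
    rwa [Real.dist_eq, sub_zero, abs_of_nonneg infDist_nonneg] at h2
  choose u hu1 hu2 using hu
  have hu0 : ∀ k, 0 ≤ u k := fun k => le_trans (Nat.cast_nonneg k) (hu1 k)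
  obtain ⟨pbar, hpbarK, σ, hσ, hconv⟩ := hKc.tendsto_subseq (fun k => hKφ (u k) (hu0 k))
  set T : ℕ → ℝ := fun k => u (σ k) with hTdef
  have hTtop : Tendsto T atTop atTop := by
    apply tendsto_atTop_mono (fun k => ?_) tendsto_natCast_atTop_atTop
    calc ((k:ℝ)) ≤ (σ k : ℝ) := by exact_mod_cast hσ.le_apply
      _ ≤ T k := hu1 (σ k)
  have hT0 : ∀ k, 0 ≤ T k := fun k => hu0 (σ k)
  have hTconv : Tendsto (fun k => φ (T k)) atTop (𝓝 pbar) := hconv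
  have hgz2 : g pbar.2 = 0 := by
    have t1 : Tendsto (fun k => g ((φ (T k)).2)) atTop (𝓝 (g pbar.2)) :=
      ((hg.continuous.comp continuous_snd).continuousAt.tendsto).comp hTconv
    have t2 : Tendsto (fun k => g ((φ (T k)).2)) atTop (𝓝 0) := gtend.comp hTtop
    exact tendsto_nhds_unique t1 t2
  have hεbar : ε ≤ infDist pbar E := by
    have t1 : Tendsto (fun k => infDist (φ (T k)) E) atTop (𝓝 (infDist pbar E)) :=
      ((continuous_infDist_pt E).continuousAt.tendsto).comp hTconv
    exact ge_of_tendsto t1 (Eventually.of_forall (fun k => hu2 (σ k)))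
  have hv : A pbar.2 pbar.1 = 0 := by
    by_contra hvne
    set c : ℝ := ‖A pbar.2 pbar.1‖ ^ 2 with hcdef
    have hcpos : 0 < c := pow_pos (norm_pos_iff.2 hvne) 2
    set G : En n × En m → ℝ := fun p => (inner ℝ (A p.2 p.1) (A p.2 pbar.1) : ℝ) with hGdef
    have hGcont : Continuous G := Continuous.inner (𝕜 := ℝ)
      (Continuous.clm_apply (hAcont.comp continuous_snd) continuous_fst)
      (Continuous.clm_apply (hAcont.comp continuous_snd) continuous_const)
    have hGpbar : G pbar = c := by
      simp only [hGdef, hcdef]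
      exact real_inner_self_eq_norm_sq _
    have hopen : IsOpen {p : En n × En m | c / 2 < G p} := isOpen_lt continuous_const hGcont
    have hmem : pbar ∈ {p : En n × En m | c / 2 < G p} := by
      simp only [mem_setOf_eq, hGpbar]; linarith
    have hballev : ∀ᶠ p in 𝓝 pbar, c / 2 < G p := hopen.mem_nhds hmem
    obtain ⟨r, hr, hball⟩ := Metric.eventually_nhds_iff_ball.1 hballev
    -- speed bound
    have hVcont : Continuous (fun p : En n × En m => (-(g p.2), A p.2 p.1)) :=
      Continuous.prodMk ((hg.continuous.comp continuous_snd).neg)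
        (Continuous.clm_apply (hAcont.comp continuous_snd) continuous_fst)
    obtain ⟨M, hM⟩ := hKc.exists_bound_of_continuousOn hVcont.continuousOn
    have hM0 : 0 ≤ M := le_trans (norm_nonneg _) (hM (φ 0) (hKφ 0 le_rfl))
    set δ : ℝ := r / (2 * (M + 1)) with hδdef
    have hδpos : 0 < δ := by positivity
    have hMδ : (M + 1) * δ = r / 2 := by rw [hδdef]; field_simp
    set β : ℝ → ℝ := fun t => (inner ℝ (g ((φ t).2)) pbar.1 : ℝ) with hβdef
    have hβ' : ∀ t : ℝ, 0 ≤ t → HasDerivAt β (G (φ t)) t := fun t ht => hgw pbar.1 t ht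
    have hβtend : Tendsto β atTop (𝓝 0) := by
      have := Tendsto.inner (𝕜 := ℝ) gtend (tendsto_const_nhds (x := pbar.1))
      simpa using this
    have hclose : ∀ᶠ k in atTop, dist (φ (T k)) pbar < r / 2 := by
      have := hTconv (ball_mem_nhds pbar (half_pos hr))
      simpa [Metric.mem_ball] using this
    have hstep : ∀ k : ℕ, dist (φ (T k)) pbar < r / 2 →
        δ * (c / 2) ≤ β (T k + δ) - β (T k) := by
      intro k hk
      apply increment_ge hδpos.le
      · intro t ht
        exact hβ' t (le_trans (hT0 k) ht.1)
      · intro t ht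
        have h0t : 0 ≤ t := le_trans (hT0 k) ht.1
        have hlip : ‖φ t - φ (T k)‖ ≤ (M + 1) * ‖t - T k‖ := by
          apply lip_of_deriv_bound (f' := fun s => (-(g ((φ s).2)), A ((φ s).2) ((φ s).1)))
            (convex_Icc (T k) (T k + δ))
          · intro s hs
            have h0s : 0 ≤ s := le_trans (hT0 k) hs.1
            have := hφ s h0s
            rwa [hXsp (φ s)] at this
          · intro s hs
            have h0s : 0 ≤ s := le_trans (hT0 k) hs.1
            have := hM (φ s) (hKφ s h0s)
            linarith
          · exact ⟨le_refl _, by linarith⟩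
          · exact ht
        have habs : ‖t - T k‖ ≤ δ := by
          rw [Real.norm_eq_abs, abs_of_nonneg (by linarith [ht.1])]
          linarith [ht.2]
        have hdist2 : dist (φ t) pbar < r := by
          calc dist (φ t) pbar ≤ dist (φ t) (φ (T k)) + dist (φ (T k)) pbar :=
                dist_triangle _ _ _
            _ < r / 2 + r / 2 := by
                apply add_lt_add_of_le_of_lt _ hk
                rw [dist_eq_norm]
                calc ‖φ t - φ (T k)‖ ≤ (M + 1) * ‖t - T k‖ := hlip
                  _ ≤ (M + 1) * δ := by
                      apply mul_le_mul_of_nonneg_left habs; linarith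
                  _ = r / 2 := hMδ
            _ = r := by ring
        have := hball (φ t) (by rwa [Metric.mem_ball])
        linarith
    have hlim : Tendsto (fun k => β (T k + δ) - β (T k)) atTop (𝓝 0) := by
      have l1 : Tendsto (fun k => β (T k + δ)) atTop (𝓝 0) :=
        hβtend.comp (tendsto_atTop_add_const_right atTop δ hTtop)
      have l2 : Tendsto (fun k => β (T k)) atTop (𝓝 0) := hβtend.comp hTtop
      simpa using l1.sub l2
    have hev : ∀ᶠ k in atTop, δ * (c / 2) ≤ β (T k + δ) - β (T k) :=
      hclose.mono (fun k hk => hstep k hk)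
    have hfin : δ * (c / 2) ≤ 0 := ge_of_tendsto hlim hev
    nlinarith
  have hpbarE : pbar ∈ E := ⟨hgz2, hv⟩
  rw [infDist_zero_of_mem hpbarE] at hεbar
  linarith
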